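/- arXiv:1110.6816 — 3 statements merged into one kernel-verified Lean document; each statement's English description precedes it below -/
import Mathlib

section
/- Let V be a finite-dimensional vector space over ℚ of dimension d ≥ 1, let Ψ be a subset of V and μ₀ ∈ V such that Ψ ∪ {μ₀} spans V. Let S be a set of linear functionals φ : V → ℚ such that for every φ ∈ S and every μ ∈ Ψ one has φ(μ) = 0 or φ(μ) = 1, and moreover φ(μ₀) = 1 for every φ ∈ S. Then S is finite and has cardinality at most 2^(d−1). -/
/-- Let `V` be a finite-dimensional `ℚ`-vector space of dimension `d ≥ 1`,
`Ψ ⊆ V` and `μ₀ ∈ V` with `Ψ ∪ {μ₀}` spanning `V`. Let `S` be a set of linear functionals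
`φ : V → ℚ` such that `φ μ ∈ {0, 1}` for every `φ ∈ S`, `μ ∈ Ψ`, and `φ μ₀ = 1` for every
`φ ∈ S`. Then `S` is finite of cardinality at most `2 ^ (d - 1)`. -/
theorem stmt1 (V : Type*) [AddCommGroup V] [Module ℚ V] [FiniteDimensional ℚ V]
    (d : ℕ) (hd : d = Module.finrank ℚ V) (hd1 : 1 ≤ d)
    (Ψ : Set V) (μ₀ : V) (hΨ : Submodule.span ℚ (Ψ ∪ {μ₀}) = ⊤)
    (S : Set (V →ₗ[ℚ] ℚ))
    (hS : ∀ φ ∈ S, ∀ μ ∈ Ψ, φ μ = 0 ∨ φ μ = 1)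
    (hS0 : ∀ φ ∈ S, φ μ₀ = 1) :
    S.Finite ∧ Nat.card S ≤ 2 ^ (d - 1) := by
  by_cases hμ : μ₀ = (0 : V)
  · have hSe : S = ∅ := by
      ext φ
      simp only [Set.mem_empty_iff_false, iff_false]
      intro hφ
      have h1 := hS0 φ hφ
      rw [hμ, map_zero] at h1
      exact one_ne_zero h1.symm
    subst hSe
    refine ⟨Set.finite_empty, ?_⟩
    simp
  · have hli : LinearIndependent ℚ ((↑) : ({μ₀} : Set V) → V) :=
      (linearIndepOn_singleton_iff (R := ℚ) (v := id) (i := μ₀)).2 hμ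
    obtain ⟨B, hBsub, hμB, hBspan, hBli⟩ :=
      exists_linearIndepOn_id_extension hli Set.subset_union_right
    have hμ₀B : μ₀ ∈ B := hμB rfl
    have hspan : Submodule.span ℚ B = ⊤ := by
      rw [eq_top_iff, ← hΨ]
      exact Submodule.span_le.2 hBspan
    classical
    let b : Module.Basis B ℚ V := Module.Basis.mk (show LinearIndependent ℚ ((↑) : B → V) from hBli) (by rw [Subtype.range_coe, hspan])
    haveI : Fintype B := FiniteDimensional.fintypeBasisIndex b
    have hcard : Fintype.card B = d := by
      rw [hd, Module.finrank_eq_card_basis b]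
    have hb : ∀ x : B, b x = (x : V) := fun x => Module.Basis.mk_apply hBli _ x
    let T := {x : B // (x : V) ≠ μ₀}
    let f : S → (T → Bool) := fun φ x => decide ((φ : V →ₗ[ℚ] ℚ) (x.1 : V) = 1)
    have hf : Function.Injective f := by
      intro φ ψ h
      apply Subtype.ext
      apply b.ext
      intro x
      rw [hb]
      by_cases hx : (x : V) = μ₀
      · rw [hx, hS0 _ φ.2, hS0 _ ψ.2]
      · have hxΨ : (x : V) ∈ Ψ := by
          rcases hBsub x.2 with h' | h'
          · exact h'
          · exact absurd h' hx
        have h1 := hS _ φ.2 _ hxΨ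
        have h2 := hS _ ψ.2 _ hxΨ
        have h3 := congrFun h (⟨x, hx⟩ : T)
        simp only [f, decide_eq_decide] at h3
        rcases h1 with h1 | h1 <;> rcases h2 with h2 | h2 <;>
          simp [h1, h2] at h3 ⊢ <;> omega
    haveI : Finite S := Finite.of_injective f hf
    refine ⟨Set.toFinite S, ?_⟩
    have h1 : Fintype.card {x : B // (x : V) = μ₀} = 1 := by
      rw [Fintype.card_eq_one_iff]
      refine ⟨⟨⟨μ₀, hμ₀B⟩, rfl⟩, ?_⟩
      rintro ⟨x, hx⟩
      exact Subtype.ext (Subtype.ext hx)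
    have hT : Fintype.card T = d - 1 := by
      have := Fintype.card_subtype_compl (fun x : B => (x : V) = μ₀)
      rw [h1, hcard] at this
      exact this
    calc Nat.card S ≤ Nat.card (T → Bool) := Nat.card_le_card_of_injective f hf
      _ = 2 ^ (d - 1) := by
          rw [Nat.card_eq_fintype_card, Fintype.card_fun, hT, Fintype.card_bool]
end

section
/- For every positive integer n, g₁(n) ≤ g(n + ⌊√(2n)⌋), where g is Landau's function and g₁ is the modified Landau function, and ⌊√(2n)⌋ is the integer part of √(2n). -/
/-- Landau's function: `g n` is the maximum of `lcm(a₁, …, a_k)` over all finite multisets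
of positive integers with sum `n` (so `g 0 = 1`, attained by the empty multiset). -/
noncomputable def landau (n : ℕ) : ℕ :=
  sSup {m : ℕ | ∃ M : Multiset ℕ, (∀ a ∈ M, 0 < a) ∧ M.sum = n ∧ M.lcm = m}

/-- The modified Landau function: `g₁ n` is the maximum of `lcm(a₁, …, a_k)` over all
finite multisets of integers `aᵢ ≥ 2` with `∑ᵢ (aᵢ - 1) = n` (so `g₁ 0 = 1`). -/
noncomputable def landau₁ (n : ℕ) : ℕ :=
  sSup {m : ℕ | ∃ M : Multiset ℕ, (∀ a ∈ M, 2 ≤ a) ∧ (M.map (· - 1)).sum = n ∧ M.lcm = m}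

/-- A finset of positive natural numbers of cardinality `k` has sum at least `k(k+1)/2`. -/
lemma triangle_le_sum (s : Finset ℕ) (h : ∀ a ∈ s, 1 ≤ a) :
    s.card * (s.card + 1) ≤ 2 * ∑ a ∈ s, a := by
  induction s using Finset.strongInduction with
  | _ s ih =>
    rcases s.eq_empty_or_nonempty with rfl | hne
    · simp
    · set m := s.max' hne with hm
      have hms : m ∈ s := s.max'_mem hne
      have hsub : s ⊆ Finset.Icc 1 m := fun a ha =>
        Finset.mem_Icc.2 ⟨h a ha, s.le_max' a ha⟩
      have hcard : s.card ≤ m := by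
        have := Finset.card_le_card hsub
        simpa using this
      have ih' := ih (s.erase m) (Finset.erase_ssubset hms)
        (fun a ha => h a (Finset.mem_of_mem_erase ha))
      have hsum : ∑ a ∈ s, a = m + ∑ a ∈ s.erase m, a :=
        (Finset.add_sum_erase s id hms).symm
      have hcard' : (s.erase m).card = s.card - 1 := Finset.card_erase_of_mem hms
      have h1 : 1 ≤ s.card := Finset.Nonempty.card_pos hne
      rw [hcard'] at ih'
      rw [hsum]
      obtain ⟨t, ht⟩ : ∃ t, s.card = t + 1 := ⟨s.card - 1, by omega⟩
      rw [ht] at ih' hcard ⊢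
      simp only [Nat.add_sub_cancel] at ih'
      nlinarith

/-- The set defining `landau N` is bounded above by `N.factorial`. -/
lemma landau_bddAbove (N : ℕ) :
    ∀ m ∈ {m : ℕ | ∃ M : Multiset ℕ, (∀ a ∈ M, 0 < a) ∧ M.sum = N ∧ M.lcm = m},
      m ≤ Nat.factorial N := by
  rintro m ⟨M, hpos, hsum, hlcm⟩
  have hdvd : M.lcm ∣ N.factorial := by
    rw [Multiset.lcm_dvd]
    intro b hb
    obtain ⟨M', rfl⟩ := Multiset.exists_cons_of_mem hb
    have hble : b ≤ N := by
      rw [← hsum, Multiset.sum_cons]; exact Nat.le_add_right _ _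
    exact Nat.dvd_factorial (hpos b hb) hble
  rw [← hlcm]
  exact Nat.le_of_dvd (Nat.factorial_pos N) hdvd

/-- For every positive integer `n`, `g₁(n) ≤ g(n + ⌊√(2n)⌋)`. -/
theorem stmt5 (n : ℕ) (hn : 0 < n) : landau₁ n ≤ landau (n + Nat.sqrt (2 * n)) := by
  set N := n + Nat.sqrt (2 * n) with hN
  apply csSup_le
  · refine ⟨n + 1, {n + 1}, fun a ha => ?_, ?_, ?_⟩
    · simp at ha; omega
    · simp
    · simp
  · rintro m ⟨M, h2, hsum, hlcm⟩
    set D := M.dedup with hD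
    have hDnodup : D.Nodup := M.nodup_dedup
    have hDlcm : D.lcm = m := by rw [hD, Multiset.lcm_dedup, hlcm]
    have hD2 : ∀ a ∈ D, 2 ≤ a := fun a ha => h2 a (Multiset.mem_dedup.1 ha)
    -- the mapped multiset of (a-1)'s
    have hDle : (D.map (· - 1)).sum ≤ n := by
      obtain ⟨u, hu⟩ := Multiset.le_iff_exists_add.1
        (Multiset.map_le_map (α := ℕ) (f := (· - 1)) (M.dedup_le))
      rw [← hsum, hu, Multiset.sum_add]
      exact Nat.le_add_right _ _
    have hmapnodup : (D.map (· - 1)).Nodup := by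
      refine Multiset.Nodup.map_on ?_ hDnodup
      intro x hx y hy hxy
      have := hD2 x hx; have := hD2 y hy
      omega
    -- triangle bound on card
    set k := D.card with hk
    have htri : k * (k + 1) ≤ 2 * n := by
      have hcard : (D.map (· - 1)).toFinset.card = k := by
        rw [Multiset.toFinset_card_of_nodup hmapnodup, Multiset.card_map]
      have hsum' : ∑ a ∈ (D.map (· - 1)).toFinset, a = (D.map (· - 1)).sum := by
        simp [Finset.sum, Multiset.toFinset_val, Multiset.dedup_eq_self.2 hmapnodup]
      have h1 : ∀ a ∈ (D.map (· - 1)).toFinset, 1 ≤ a := by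
        intro a ha
        rw [Multiset.mem_toFinset, Multiset.mem_map] at ha
        obtain ⟨b, hb, rfl⟩ := ha
        have := hD2 b hb; omega
      have := triangle_le_sum _ h1
      rw [hcard, hsum'] at this
      omega
    have hksqrt : k ≤ Nat.sqrt (2 * n) := by
      rw [Nat.le_sqrt]
      nlinarith
    -- D.sum = mapped sum + k
    have hDsum : D.sum = (D.map (· - 1)).sum + k := by
      have hmapid : D.map (fun a => (a - 1) + 1) = D := by
        have := Multiset.map_congr (rfl : D = D)
          (fun a ha => (by have := hD2 a ha; simp only [id_eq]; omega : a - 1 + 1 = id a))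
        simpa using this
      calc D.sum = (D.map (fun a => (a - 1) + 1)).sum := by rw [hmapid]
        _ = (D.map (· - 1)).sum + (D.map (fun _ => 1)).sum := by
              rw [← Multiset.sum_map_add]
        _ = (D.map (· - 1)).sum + k := by
              rw [Multiset.map_const', Multiset.sum_replicate, smul_eq_mul, mul_one]
    have hDsumle : D.sum ≤ N := by
      rw [hDsum, hN]; omega
    -- the padded multiset
    set M' := D + Multiset.replicate (N - D.sum) 1 with hM'
    have hmem : m ∈ {m : ℕ | ∃ M : Multiset ℕ, (∀ a ∈ M, 0 < a) ∧ M.sum = N ∧ M.lcm = m} := by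
      refine ⟨M', ?_, ?_, ?_⟩
      · intro a ha
        rw [hM', Multiset.mem_add] at ha
        rcases ha with ha | ha
        · have := hD2 a ha; omega
        · have := Multiset.eq_of_mem_replicate ha; omega
      · rw [hM', Multiset.sum_add, Multiset.sum_replicate, smul_eq_mul, mul_one]
        omega
      · have h1 : (Multiset.replicate (N - D.sum) 1).lcm = 1 :=
          Nat.dvd_one.mp (Multiset.lcm_dvd.2 fun b hb => by
            rw [Multiset.eq_of_mem_replicate hb])
        rw [hM', Multiset.lcm_add, h1, ← hDlcm]
        simp [Nat.lcm]
    exact le_csSup ⟨N.factorial, landau_bddAbove N⟩ hmem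
end

section
/- Define f(x) = ((x + √(2x)) · log(x + √(2x))) / (x · log x) for real x > 1, with natural logarithm. Then f is decreasing on the interval (1, ∞): for all 1 < x ≤ y, f(y) ≤ f(x). -/
open Real

lemma stmt10_key (x : ℝ) (hx : 1 < x) :
    ((x + Real.sqrt (2 * x)) * Real.log (x + Real.sqrt (2 * x))) / (x * Real.log x)
      = (1 + Real.sqrt (2 / x)) * (1 + Real.log (1 + Real.sqrt (2 / x)) / Real.log x) := by
  have hx0 : (0:ℝ) < x := by linarith
  have hs : Real.sqrt (2 * x) = x * Real.sqrt (2 / x) := by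
    rw [show (2:ℝ) * x = x ^ 2 * (2 / x) by field_simp,
      Real.sqrt_mul (by positivity), Real.sqrt_sq hx0.le]
  have hpos : (0:ℝ) < 1 + Real.sqrt (2 / x) := by positivity
  have hlog : Real.log (x + Real.sqrt (2 * x))
      = Real.log x + Real.log (1 + Real.sqrt (2 / x)) := by
    rw [hs, show x + x * Real.sqrt (2 / x) = x * (1 + Real.sqrt (2 / x)) by ring,
      Real.log_mul hx0.ne' hpos.ne']
  have hlx : Real.log x ≠ 0 := (Real.log_pos hx).ne'
  rw [hlog, hs]
  field_simp

/-- With `f(x) = (x + √(2x)) · log(x + √(2x)) / (x · log x)` (natural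
logarithm), `f` is decreasing on `(1, ∞)`: for all `1 < x ≤ y`, `f(y) ≤ f(x)`. -/
theorem stmt10 (x y : ℝ) (hx : 1 < x) (hxy : x ≤ y) :
    ((y + Real.sqrt (2 * y)) * Real.log (y + Real.sqrt (2 * y))) / (y * Real.log y) ≤
      ((x + Real.sqrt (2 * x)) * Real.log (x + Real.sqrt (2 * x))) / (x * Real.log x) := by
  have hy : 1 < y := lt_of_lt_of_le hx hxy
  rw [stmt10_key x hx, stmt10_key y hy]
  have hx0 : (0:ℝ) < x := by linarith
  have hy0 : (0:ℝ) < y := by linarith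
  have hss : Real.sqrt (2 / y) ≤ Real.sqrt (2 / x) :=
    Real.sqrt_le_sqrt (by gcongr)
  have hax : (0:ℝ) < 1 + Real.sqrt (2 / x) := by positivity
  have hay : (0:ℝ) < 1 + Real.sqrt (2 / y) := by positivity
  have hLy : 0 ≤ Real.log (1 + Real.sqrt (2 / y)) :=
    Real.log_nonneg (le_add_of_nonneg_right (Real.sqrt_nonneg _))
  have hL : Real.log (1 + Real.sqrt (2 / y)) ≤ Real.log (1 + Real.sqrt (2 / x)) :=
    Real.log_le_log hay (by linarith)
  have hLx : 0 ≤ Real.log (1 + Real.sqrt (2 / x)) := le_trans hLy hL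
  have hlx : 0 < Real.log x := Real.log_pos hx
  have hlxy : Real.log x ≤ Real.log y := Real.log_le_log hx0 hxy
  have hdiv : Real.log (1 + Real.sqrt (2 / y)) / Real.log y
      ≤ Real.log (1 + Real.sqrt (2 / x)) / Real.log x :=
    div_le_div₀ hLx hL hlx hlxy
  have h1 : (0:ℝ) ≤ 1 + Real.log (1 + Real.sqrt (2 / y)) / Real.log y := by
    have : 0 ≤ Real.log (1 + Real.sqrt (2 / y)) / Real.log y :=
      div_nonneg hLy (by linarith)
    linarith
  exact mul_le_mul (by linarith) (by linarith) h1 hax.le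
end
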